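/- arXiv:1501.04343 — 5 statements merged into one kernel-verified Lean document; each statement's English description precedes it below -/
import Mathlib

section
/- Suppose each task T_j in a finite set S has deadline d_j, workload D_j, parallelism bound k_j, and a feasible allocation y_j : {1,...,d} → {0,...,k_j} with y_j(t) = 0 for t > d_j and Σ_t y_j(t) = D_j, such that Σ_j y_j(t) ≤ C for all t. Then for every m ∈ {0,...,L}, the total remaining workload after interval [τ_m+1, d], namely Σ_{j∈S} D_j minus the maximum (capacity-constrained) workload λ_{L-m}^C(S) processable in [τ_m+1, d], satisfies μ_m^C(S) ≤ C·τ_m. (Necessity of the boundary condition.) -/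
/-- Ceiling division: `⌈D/k⌉`. -/
def ceilDiv (D k : ℕ) : ℕ := (D + k - 1) / k

/-- Uncapacitated maximum workload `λ_m(S)` of the task set `S` in `[τ_{L-m}+1, τ_L]`. -/
def lamS {ι : Type*} (S : Finset ι) (dl Dw kb : ι → ℕ) (τ : ℕ → ℕ) (L m : ℕ) : ℕ :=
  ∑ j ∈ S,
    if ceilDiv (Dw j) (kb j) ≤ dl j - τ (L - m) then Dw j
    else kb j * (dl j - τ (L - m))

/-- The capacity-constrained sequence `λ_m^C`. -/
def lamCseq (C L : ℕ) (τ lamf : ℕ → ℕ) : ℕ → ℕ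
  | 0 => 0
  | m + 1 =>
      lamCseq C L τ lamf m +
        min (lamf (m + 1) - lamCseq C L τ lamf m) (C * (τ (L - m) - τ (L - m - 1)))

/-- Remaining workload `μ_m^C(S)` of `S` after optimally utilizing `[τ_m+1, τ_L]`. -/
def muC {ι : Type*} (S : Finset ι) (dl Dw kb : ι → ℕ) (τ : ℕ → ℕ) (C L m : ℕ) : ℕ :=
  (∑ j ∈ S, Dw j) - lamCseq C L τ (lamS S dl Dw kb τ L) (L - m)

/-- The boundary condition: `μ_m^C(S) ≤ C·τ_m` for all `m ∈ {0,…,L}`. -/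
def BoundaryCond {ι : Type*} (S : Finset ι) (dl Dw kb : ι → ℕ) (τ : ℕ → ℕ) (C L : ℕ) : Prop :=
  ∀ m ≤ L, muC S dl Dw kb τ C L m ≤ C * τ m

/-- Necessity of the boundary condition: if the task set `S` admits a feasible schedule
on `C` machines, then `μ_m^C(S) ≤ C·τ_m` for every `m ∈ {0,…,L}`. -/
theorem boundary_condition_necessary {ι : Type*} (S : Finset ι) (dl Dw kb : ι → ℕ)
    (C L d : ℕ) (τ : ℕ → ℕ)
    (hτ0 : τ 0 = 0) (hτmono : ∀ m < L, τ m < τ (m + 1)) (hτL : τ L = d) (hL : 0 < L)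
    (hdl : ∀ j ∈ S, ∃ m, 1 ≤ m ∧ m ≤ L ∧ dl j = τ m)
    (hkpos : ∀ j ∈ S, 0 < kb j)
    (y : ι → ℕ → ℕ)
    (hyk : ∀ j ∈ S, ∀ t, y j t ≤ kb j)
    (hydl : ∀ j ∈ S, ∀ t, dl j < t → y j t = 0)
    (hyD : ∀ j ∈ S, ∑ t ∈ Finset.Icc 1 d, y j t = Dw j)
    (hcap : ∀ t, ∑ j ∈ S, y j t ≤ C) :
    ∀ m ≤ L, muC S dl Dw kb τ C L m ≤ C * τ m := by
  classical
  have mono : ∀ b ≤ L, ∀ a ≤ b, τ a ≤ τ b := by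
    intro b
    induction b with
    | zero => intro _ a ha; interval_cases a; exact le_rfl
    | succ n ih =>
      intro hb a ha
      rcases eq_or_lt_of_le ha with h | h
      · exact h ▸ le_rfl
      · exact le_trans (ih (by omega) a (by omega)) (le_of_lt (hτmono n (by omega)))
  have task_bound : ∀ j ∈ S, ∀ a, ∑ t ∈ Finset.Ioc a d, y j t ≤ min (Dw j) (kb j * (dl j - a)) := by
    intro j hj a
    refine le_min ?_ ?_
    · rw [← hyD j hj]
      apply Finset.sum_le_sum_of_subset
      intro t ht
      simp only [Finset.mem_Ioc, Finset.mem_Icc] at *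
      omega
    · have heq : ∑ t ∈ Finset.Ioc a d, y j t = ∑ t ∈ Finset.Ioc a (min (dl j) d), y j t := by
        refine (Finset.sum_subset (Finset.Ioc_subset_Ioc_right (min_le_right _ _)) ?_).symm
        intro t ht hnt
        simp only [Finset.mem_Ioc, lt_min_iff, le_min_iff, not_and, not_le] at ht hnt
        exact hydl j hj t (by omega)
      rw [heq]
      calc ∑ t ∈ Finset.Ioc a (min (dl j) d), y j t
          ≤ ∑ _t ∈ Finset.Ioc a (min (dl j) d), kb j :=
            Finset.sum_le_sum (fun t _ => hyk j hj t)
        _ = (min (dl j) d - a) * kb j := by rw [Finset.sum_const, Nat.card_Ioc, smul_eq_mul]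
        _ ≤ kb j * (dl j - a) := by
            rw [Nat.mul_comm]; exact Nat.mul_le_mul_left _ (by omega)
  set lam := lamS S dl Dw kb τ L with hlam
  have key : ∀ r ≤ L, ∑ j ∈ S, ∑ t ∈ Finset.Ioc (τ (L - r)) d, y j t ≤ lamCseq C L τ lam r := by
    intro r
    induction r with
    | zero =>
      intro _
      simp [lamCseq, hτL]
    | succ r ih =>
      intro hr
      set m := L - (r + 1) with hmdef
      have e1 : L - r - 1 = m := by omega
      have e2 : L - r = m + 1 := by omega
      have hτmd : τ (m + 1) ≤ d := by rw [← hτL]; exact mono L le_rfl (m + 1) (by omega)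
      have hτmm : τ m ≤ τ (m + 1) := le_of_lt (hτmono m (by omega))
      have goal1 : ∑ j ∈ S, ∑ t ∈ Finset.Ioc (τ m) d, y j t ≤ lam (r + 1) := by
        rw [hlam]
        unfold lamS
        rw [show L - (r + 1) = m from rfl]
        apply Finset.sum_le_sum
        intro j hj
        refine le_trans (task_bound j hj (τ m)) ?_
        split
        · exact min_le_left _ _
        · exact min_le_right _ _
      have hsplit : ∑ j ∈ S, ∑ t ∈ Finset.Ioc (τ m) d, y j t
          = ∑ j ∈ S, ∑ t ∈ Finset.Ioc (τ m) (τ (m + 1)), y j t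
            + ∑ j ∈ S, ∑ t ∈ Finset.Ioc (τ (m + 1)) d, y j t := by
        rw [← Finset.sum_add_distrib]
        refine Finset.sum_congr rfl fun j _ => ?_
        rw [← Finset.sum_Ioc_consecutive _ hτmm hτmd]
      have hcapB : ∑ j ∈ S, ∑ t ∈ Finset.Ioc (τ m) (τ (m + 1)), y j t
          ≤ C * (τ (m + 1) - τ m) := by
        rw [Finset.sum_comm]
        calc ∑ t ∈ Finset.Ioc (τ m) (τ (m + 1)), ∑ j ∈ S, y j t
            ≤ ∑ _t ∈ Finset.Ioc (τ m) (τ (m + 1)), C := Finset.sum_le_sum fun t _ => hcap t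
          _ = (τ (m + 1) - τ m) * C := by rw [Finset.sum_const, Nat.card_Ioc, smul_eq_mul]
          _ = C * (τ (m + 1) - τ m) := Nat.mul_comm _ _
      have ih' : ∑ j ∈ S, ∑ t ∈ Finset.Ioc (τ (m + 1)) d, y j t ≤ lamCseq C L τ lam r := by
        rw [← e2]; exact ih (by omega)
      show _ ≤ lamCseq C L τ lam (r + 1)
      rw [lamCseq, e1, e2]
      set A := ∑ j ∈ S, ∑ t ∈ Finset.Ioc (τ m) d, y j t
      set B := ∑ j ∈ S, ∑ t ∈ Finset.Ioc (τ m) (τ (m + 1)), y j t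
      set A' := ∑ j ∈ S, ∑ t ∈ Finset.Ioc (τ (m + 1)) d, y j t
      set P := C * (τ (m + 1) - τ m)
      omega
  intro m hm
  have hkey := key (L - m) (by omega)
  rw [show L - (L - m) = m from by omega] at hkey
  have hτmd : τ m ≤ d := by rw [← hτL]; exact mono L le_rfl m hm
  have htot : ∑ j ∈ S, Dw j
      = ∑ j ∈ S, ∑ t ∈ Finset.Ioc 0 (τ m), y j t
        + ∑ j ∈ S, ∑ t ∈ Finset.Ioc (τ m) d, y j t := by
    rw [← Finset.sum_add_distrib]
    refine Finset.sum_congr rfl fun j hj => ?_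
    rw [← hyD j hj, show Finset.Icc 1 d = Finset.Ioc 0 d from (Finset.Icc_add_one_left_eq_Ioc (a := 0) (b := d)).symm ▸ rfl,
      ← Finset.sum_Ioc_consecutive _ (Nat.zero_le _) hτmd]
  have hP : ∑ j ∈ S, ∑ t ∈ Finset.Ioc 0 (τ m), y j t ≤ C * τ m := by
    rw [Finset.sum_comm]
    calc ∑ t ∈ Finset.Ioc 0 (τ m), ∑ j ∈ S, y j t
        ≤ ∑ _t ∈ Finset.Ioc 0 (τ m), C := Finset.sum_le_sum fun t _ => hcap t
      _ = (τ m - 0) * C := by rw [Finset.sum_const, Nat.card_Ioc, smul_eq_mul]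
      _ = C * τ m := by rw [Nat.sub_zero, Nat.mul_comm]
  unfold muC
  rw [← hlam]
  set A := ∑ j ∈ S, ∑ t ∈ Finset.Ioc (τ m) d, y j t
  set P := ∑ j ∈ S, ∑ t ∈ Finset.Ioc 0 (τ m), y j t
  set Q := C * τ m
  omega
end

section
/- Let C, d_1', d_2' ∈ ℕ with 1 ≤ d_1' < d_2'. Consider C·d_1' unit tasks each with value 1+ε, workload 1, parallelism bound 1, deadline d_1', and some tasks with value d_2'-d_1'+1, workload d_2'-d_1'+1, parallelism bound 1, deadline d_2'. Any greedy algorithm that processes tasks in nonincreasing marginal-value order and accepts a task iff it remains jointly feasible will accept all unit tasks and reject all long tasks, achieving social welfare (1+ε)·C·d_1', while the schedule accepting C long tasks and C·(d_1'-1) unit tasks achieves welfare at least C·(d_2'-d_1'+1) + (1+ε)·C·(d_1'-1). Consequently the greedy approximation ratio on this instance is at most ((1+ε)d_1') / ((1+ε)(d_1'-1) + (d_2'-d_1'+1)). -/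
/-- Workloads in the lower-bound instance: unit tasks and long tasks. -/
def wl6 (d1 d2 : ℕ) {a b : ℕ} : Fin a ⊕ Fin b → ℕ :=
  Sum.elim (fun _ => 1) (fun _ => d2 - d1 + 1)

/-- Deadlines in the lower-bound instance. -/
def dl6 (d1 d2 : ℕ) {a b : ℕ} : Fin a ⊕ Fin b → ℕ :=
  Sum.elim (fun _ => d1) (fun _ => d2)

/-- Values in the lower-bound instance. -/
def val6 (ε : ℝ) (d1 d2 : ℕ) {a b : ℕ} : Fin a ⊕ Fin b → ℝ :=
  Sum.elim (fun _ => 1 + ε) (fun _ => ((d2 - d1 + 1 : ℕ) : ℝ))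

/-- Feasibility of fully scheduling the set `A` of tasks of the lower-bound instance on
`C` machines (all parallelism bounds equal `1`). -/
def Feas6 (C d1 d2 : ℕ) {a b : ℕ} (A : Finset (Fin a ⊕ Fin b)) : Prop :=
  ∃ y : (Fin a ⊕ Fin b) → ℕ → ℕ,
    (∀ i ∈ A, ∀ t, y i t ≤ 1) ∧
    (∀ i ∈ A, ∀ t, dl6 d1 d2 i < t → y i t = 0) ∧
    (∀ i ∈ A, ∑ t ∈ Finset.Icc 1 d2, y i t = wl6 d1 d2 i) ∧
    (∀ t, ∑ i ∈ A, y i t ≤ C)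

lemma sum_slot_le (C t : ℕ) (hC : 0 < C) {m : ℕ} :
    (∑ j : Fin m, if t = (j : ℕ) / C + 1 then 1 else 0) ≤ C := by
  classical
  rw [Finset.sum_boole]
  push_cast
  have h := Finset.card_le_card_of_injOn (fun j : Fin m => (j : ℕ) % C)
    (t := Finset.range C) (s := Finset.univ.filter (fun j : Fin m => t = (j : ℕ) / C + 1))
    (by intro j _; simpa using Nat.mod_lt _ hC)
    (by
      intro j1 h1 j2 h2 hmod
      simp only [Finset.coe_filter, Set.mem_setOf_eq, Finset.mem_univ, true_and] at h1 h2
      have e1 := Nat.div_add_mod (j1 : ℕ) C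
      have e2 := Nat.div_add_mod (j2 : ℕ) C
      have hq : (j1 : ℕ) / C = (j2 : ℕ) / C := by omega
      have hm : (j1 : ℕ) % C = (j2 : ℕ) % C := hmod
      apply Fin.ext
      rw [← e1, ← e2, hq, hm])
  simpa using h

lemma sum_lt_le (C : ℕ) {m : ℕ} :
    (∑ k : Fin m, if (k : ℕ) < C then 1 else 0) ≤ C := by
  classical
  rw [Finset.sum_boole]
  push_cast
  have h := Finset.card_le_card_of_injOn (fun k : Fin m => (k : ℕ))
    (t := Finset.range C) (s := Finset.univ.filter (fun k : Fin m => (k : ℕ) < C))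
    (by intro k hk
        simp only [Finset.mem_coe, Finset.mem_filter] at hk
        simpa using hk.2)
    (by intro k1 _ k2 _ h; exact Fin.ext h)
  simpa using h

lemma feas_of_left (C d1 d2 : ℕ) (hC : 0 < C) (hd : d1 ≤ d2) {b : ℕ}
    (S : Finset (Fin (C * d1) ⊕ Fin b)) (hS : ∀ i ∈ S, i.isLeft = true) :
    Feas6 C d1 d2 S := by
  classical
  have hslot : ∀ j : Fin (C * d1), (j : ℕ) / C + 1 ≤ d1 := by
    intro j
    have : (j : ℕ) / C < d1 :=
      (Nat.div_lt_iff_lt_mul hC).2 (lt_of_lt_of_le j.isLt (le_of_eq (Nat.mul_comm C d1)))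
    omega
  refine ⟨Sum.elim (fun j _t => if _t = (j : ℕ) / C + 1 then 1 else 0) (fun _ _ => 0),
    ?_, ?_, ?_, ?_⟩
  · intro i _ t
    rcases i with j | k
    · simp only [Sum.elim_inl]; split <;> simp
    · exact Nat.zero_le _
  · intro i _ t ht
    rcases i with j | k
    · simp only [dl6, Sum.elim_inl] at ht ⊢
      have h1 := hslot j
      exact if_neg (by omega)
    · rfl
  · intro i hi
    rcases i with j | k
    · simp only [Sum.elim_inl, wl6]
      rw [Finset.sum_ite_eq' (Finset.Icc 1 d2) ((j : ℕ) / C + 1) (fun _ => 1)]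
      rw [if_pos (Finset.mem_Icc.2 ⟨Nat.succ_le_succ (Nat.zero_le _), le_trans (hslot j) hd⟩)]
    · exact absurd (hS _ hi) (by simp)
  · intro t
    refine le_trans (Finset.sum_le_sum_of_subset (Finset.subset_univ S)) ?_
    rw [Fintype.sum_sum_type]
    simp only [Sum.elim_inl, Sum.elim_inr, Finset.sum_const_zero, add_zero]
    exact sum_slot_le C t hC

/-- On the instance with `C·d1'` unit tasks (value `1+ε`, workload `1`, deadline `d1'`)
and `N ≥ C` long tasks (value and workload `d2'-d1'+1`, deadline `d2'`), any greedy
algorithm considering tasks in nonincreasing marginal-value order and accepting a task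
iff it remains jointly feasible accepts exactly the unit tasks, obtaining welfare
`(1+ε)·C·d1'`, while a feasible schedule obtains at least
`C·(d2'-d1'+1) + (1+ε)·C·(d1'-1)`; hence the greedy ratio on this instance is at most
`((1+ε)d1') / ((1+ε)(d1'-1) + (d2'-d1'+1))`. -/
theorem greedy_lower_bound_instance (C d1 d2 N : ℕ) (ε : ℝ)
    (hε : 0 < ε) (hC : 0 < C) (hd1 : 1 ≤ d1) (h12 : d1 < d2) (hN : C ≤ N)
    (prec : (Fin (C * d1) ⊕ Fin N) → (Fin (C * d1) ⊕ Fin N) → Prop)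
    [DecidableRel prec]
    (htri : ∀ i j, prec i j ∨ i = j ∨ prec j i)
    (htrans : ∀ i j l, prec i j → prec j l → prec i l)
    (hirr : ∀ i, ¬ prec i i)
    (hmv : ∀ i j, prec i j →
      val6 ε d1 d2 j / (wl6 d1 d2 j : ℝ) ≤ val6 ε d1 d2 i / (wl6 d1 d2 i : ℝ))
    (A : Finset (Fin (C * d1) ⊕ Fin N))
    (hgreedy : ∀ i, i ∈ A ↔ Feas6 C d1 d2 (insert i (A.filter (fun j => prec j i)))) :
    A = Finset.univ.filter (fun i => (Sum.isLeft i) = true) ∧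
    (∑ i ∈ A, val6 ε d1 d2 i) = (1 + ε) * (C * d1) ∧
    (∃ B : Finset (Fin (C * d1) ⊕ Fin N), Feas6 C d1 d2 B ∧
      (C : ℝ) * ((d2 : ℝ) - d1 + 1) + (1 + ε) * (C * ((d1 : ℝ) - 1)) ≤
        ∑ i ∈ B, val6 ε d1 d2 i) ∧
    (∑ i ∈ A, val6 ε d1 d2 i) /
        ((C : ℝ) * ((d2 : ℝ) - d1 + 1) + (1 + ε) * (C * ((d1 : ℝ) - 1))) ≤
      ((1 + ε) * d1) / ((1 + ε) * ((d1 : ℝ) - 1) + ((d2 : ℝ) - d1 + 1)) := by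
  classical
  -- no long task precedes a unit task
  have hcast : ((d2 - d1 + 1 : ℕ) : ℝ) ≠ 0 := Nat.cast_ne_zero.2 (by omega)
  have hnoprec : ∀ (k : Fin N) (j : Fin (C * d1)),
      ¬ prec (Sum.inr k) (Sum.inl j : Fin (C * d1) ⊕ Fin N) := by
    intro k j hp
    have h := hmv _ _ hp
    simp only [val6, wl6, Sum.elim_inl, Sum.elim_inr, Nat.cast_one, div_one,
      div_self hcast] at h
    linarith
  -- every unit task is accepted
  have hunit : ∀ j : Fin (C * d1), (Sum.inl j : Fin (C * d1) ⊕ Fin N) ∈ A := by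
    intro j
    rw [hgreedy]
    apply feas_of_left C d1 d2 hC (le_of_lt h12)
    intro i hi
    rcases Finset.mem_insert.1 hi with rfl | hi
    · rfl
    · rcases i with j' | k
      · rfl
      · exact absurd (Finset.mem_filter.1 hi).2 (hnoprec k _)
  -- no long task is accepted
  have hlong : ∀ k : Fin N, (Sum.inr k : Fin (C * d1) ⊕ Fin N) ∉ A := by
    intro k hk
    obtain ⟨y, hy1, hy2, hy3, hy4⟩ := (hgreedy _).1 hk
    set S := insert (Sum.inr k : Fin (C * d1) ⊕ Fin N)
      (A.filter fun j => prec j (Sum.inr k)) with hSdef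
    have hUS : ∀ j : Fin (C * d1), (Sum.inl j : Fin (C * d1) ⊕ Fin N) ∈ S := by
      intro j
      apply Finset.mem_insert_of_mem
      refine Finset.mem_filter.2 ⟨hunit j, ?_⟩
      rcases htri (Sum.inl j) (Sum.inr k) with h | h | h
      · exact h
      · exact absurd h (by simp)
      · exact absurd h (hnoprec k j)
    have hdisj : Disjoint (Finset.Icc 1 d1) (Finset.Ioc d1 d2) := by
      rw [Finset.disjoint_left]
      intro t ht ht'
      rw [Finset.mem_Icc] at ht; rw [Finset.mem_Ioc] at ht'; omega
    have hIcc : Finset.Icc 1 d2 = Finset.Icc 1 d1 ∪ Finset.Ioc d1 d2 := by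
      ext t
      simp only [Finset.mem_Icc, Finset.mem_Ioc, Finset.mem_union]
      omega
    -- each unit task uses one slot in [1, d1]
    have hrow : ∀ j : Fin (C * d1), ∑ t ∈ Finset.Icc 1 d1, y (Sum.inl j) t = 1 := by
      intro j
      have h3 := hy3 _ (hUS j)
      rw [hIcc, Finset.sum_union hdisj] at h3
      have hz : ∑ t ∈ Finset.Ioc d1 d2, y (Sum.inl j) t = 0 :=
        Finset.sum_eq_zero fun t ht => hy2 _ (hUS j) t (Finset.mem_Ioc.1 ht).1
      simp only [wl6, Sum.elim_inl] at h3
      omega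
    have htot : ∑ t ∈ Finset.Icc 1 d1, ∑ j : Fin (C * d1), y (Sum.inl j) t = C * d1 := by
      rw [Finset.sum_comm]
      rw [Finset.sum_congr rfl fun j _ => hrow j]
      simp
    have hcap : ∀ t, y (Sum.inr k) t + ∑ j : Fin (C * d1), y (Sum.inl j) t ≤ C := by
      intro t
      have hUsub : (Finset.univ.map ⟨Sum.inl, Sum.inl_injective⟩ :
          Finset (Fin (C * d1) ⊕ Fin N)) ⊆ A.filter fun j => prec j (Sum.inr k) := by
        intro i hi
        obtain ⟨j, _, rfl⟩ := Finset.mem_map.1 hi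
        exact Finset.mem_insert.1 (hUS j) |>.resolve_left (by simp)
      have h1 : y (Sum.inr k) t + ∑ j : Fin (C * d1), y (Sum.inl j) t =
          ∑ i ∈ insert (Sum.inr k) (Finset.univ.map ⟨Sum.inl, Sum.inl_injective⟩ :
            Finset (Fin (C * d1) ⊕ Fin N)), y i t := by
        rw [Finset.sum_insert (by simp), Finset.sum_map]
        rfl
      rw [h1]
      exact le_trans (Finset.sum_le_sum_of_subset
        (Finset.insert_subset_insert _ hUsub)) (hy4 t)
    have hzero : ∑ t ∈ Finset.Icc 1 d1, y (Sum.inr k) t = 0 := by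
      have h := Finset.sum_le_sum (f := fun t => y (Sum.inr k) t +
          ∑ j : Fin (C * d1), y (Sum.inl j) t) (g := fun _ => C)
        (fun t (_ : t ∈ Finset.Icc 1 d1) => hcap t)
      rw [Finset.sum_add_distrib, htot, Finset.sum_const, Nat.card_Icc, smul_eq_mul] at h
      rw [show d1 + 1 - 1 = d1 from by omega, Nat.mul_comm d1 C] at h
      omega
    have h3k := hy3 _ (Finset.mem_insert_self _ _)
    rw [hIcc, Finset.sum_union hdisj] at h3k
    rw [Finset.sum_eq_zero fun t ht => (Finset.sum_eq_zero_iff.1 hzero) t ht] at h3k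
    have hub : ∑ t ∈ Finset.Ioc d1 d2, y (Sum.inr k) t ≤ (d2 - d1) * 1 := by
      calc ∑ t ∈ Finset.Ioc d1 d2, y (Sum.inr k) t
          ≤ ∑ _t ∈ Finset.Ioc d1 d2, 1 :=
            Finset.sum_le_sum fun t _ => hy1 _ (Finset.mem_insert_self _ _) t
        _ = (d2 - d1) * 1 := by rw [Finset.sum_const, Nat.card_Ioc, smul_eq_mul]
    simp only [wl6, Sum.elim_inr] at h3k
    omega
  -- A is exactly the unit tasks
  have hAeq : A = Finset.univ.filter (fun i => (Sum.isLeft i) = true) := by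
    ext i
    rcases i with j | k
    · simp [hunit j]
    · simp [hlong k]
  have hsum2 : (∑ i ∈ A, val6 ε d1 d2 i) = (1 + ε) * ((C : ℝ) * (d1 : ℝ)) := by
    have hmapeq : (Finset.univ.filter
        (fun i : Fin (C * d1) ⊕ Fin N => (Sum.isLeft i) = true)) =
        Finset.univ.map ⟨Sum.inl, Sum.inl_injective⟩ := by
      ext i
      rcases i with j | k <;> simp
    rw [hAeq, hmapeq, Finset.sum_map]
    simp only [Function.Embedding.coeFn_mk, val6, Sum.elim_inl]
    rw [Finset.sum_const, Finset.card_univ, Fintype.card_fin, nsmul_eq_mul]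
    push_cast
    ring
  have hC0 : (C : ℝ) ≠ 0 := Nat.cast_ne_zero.2 hC.ne'
  have c1 : ((d1 - 1 : ℕ) : ℝ) = (d1 : ℝ) - 1 := by
    rw [Nat.cast_sub hd1, Nat.cast_one]
  have c2 : ((d2 - d1 : ℕ) : ℝ) = (d2 : ℝ) - (d1 : ℝ) := Nat.cast_sub h12.le
  refine ⟨hAeq, by rw [hsum2], ?_, ?_⟩
  · -- the good schedule
    have hle1 : C * (d1 - 1) ≤ C * d1 := Nat.mul_le_mul_left _ (by omega)
    refine ⟨((Finset.univ.map (Fin.castLEEmb hle1)).map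
        (⟨Sum.inl, Sum.inl_injective⟩ : Fin (C * d1) ↪ Fin (C * d1) ⊕ Fin N)) ∪
      ((Finset.univ.map (Fin.castLEEmb hN)).map
        (⟨Sum.inr, Sum.inr_injective⟩ : Fin N ↪ Fin (C * d1) ⊕ Fin N)), ?_, ?_⟩
    · -- feasibility
      have hmemL : ∀ j : Fin (C * d1),
          (Sum.inl j : Fin (C * d1) ⊕ Fin N) ∈
            ((Finset.univ.map (Fin.castLEEmb hle1)).map
              (⟨Sum.inl, Sum.inl_injective⟩ : Fin (C * d1) ↪ Fin (C * d1) ⊕ Fin N)) ∪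
            ((Finset.univ.map (Fin.castLEEmb hN)).map
              (⟨Sum.inr, Sum.inr_injective⟩ : Fin N ↪ Fin (C * d1) ⊕ Fin N)) →
          (j : ℕ) < C * (d1 - 1) := by
        intro j hj
        rcases Finset.mem_union.1 hj with h | h
        · obtain ⟨j', hj', he⟩ := Finset.mem_map.1 h
          obtain ⟨j0, _, rfl⟩ := Finset.mem_map.1 hj'
          simp only [Function.Embedding.coeFn_mk, Sum.inl.injEq] at he
          rw [← he]
          simpa using j0.isLt
        · obtain ⟨k', _, he⟩ := Finset.mem_map.1 h
          simp at he
      have hmemR : ∀ k : Fin N,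
          (Sum.inr k : Fin (C * d1) ⊕ Fin N) ∈
            ((Finset.univ.map (Fin.castLEEmb hle1)).map
              (⟨Sum.inl, Sum.inl_injective⟩ : Fin (C * d1) ↪ Fin (C * d1) ⊕ Fin N)) ∪
            ((Finset.univ.map (Fin.castLEEmb hN)).map
              (⟨Sum.inr, Sum.inr_injective⟩ : Fin N ↪ Fin (C * d1) ⊕ Fin N)) →
          (k : ℕ) < C := by
        intro k hk
        rcases Finset.mem_union.1 hk with h | h
        · obtain ⟨j', _, he⟩ := Finset.mem_map.1 h
          simp at he
        · obtain ⟨k', hk', he⟩ := Finset.mem_map.1 h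
          obtain ⟨k0, _, rfl⟩ := Finset.mem_map.1 hk'
          simp only [Function.Embedding.coeFn_mk, Sum.inr.injEq] at he
          rw [← he]
          simpa using k0.isLt
      have hslot2 : ∀ j : Fin (C * d1), (j : ℕ) < C * (d1 - 1) → (j : ℕ) / C + 1 ≤ d1 - 1 := by
        intro j hj
        have : (j : ℕ) / C < d1 - 1 :=
          (Nat.div_lt_iff_lt_mul hC).2 (lt_of_lt_of_le hj (le_of_eq (Nat.mul_comm C (d1 - 1))))
        omega
      refine ⟨Sum.elim
        (fun j t => if (j : ℕ) < C * (d1 - 1) ∧ t = (j : ℕ) / C + 1 then 1 else 0)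
        (fun k t => if (k : ℕ) < C ∧ t ∈ Finset.Icc d1 d2 then 1 else 0), ?_, ?_, ?_, ?_⟩
      · intro i _ t
        rcases i with j | k
        · simp only [Sum.elim_inl]; split <;> simp
        · simp only [Sum.elim_inr]; split <;> simp
      · intro i _ t ht
        rcases i with j | k
        · simp only [dl6, Sum.elim_inl] at ht ⊢
          refine if_neg ?_
          rintro ⟨hj, rfl⟩
          have := hslot2 j hj
          omega
        · simp only [dl6, Sum.elim_inr] at ht ⊢
          refine if_neg ?_
          rintro ⟨-, hm⟩
          have := (Finset.mem_Icc.1 hm).2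
          omega
      · intro i hi
        rcases i with j | k
        · have hj := hmemL j hi
          simp only [Sum.elim_inl, wl6, hj, true_and]
          rw [Finset.sum_ite_eq' (Finset.Icc 1 d2) ((j : ℕ) / C + 1) (fun _ => 1)]
          have := hslot2 j hj
          rw [if_pos (Finset.mem_Icc.2 ⟨Nat.succ_le_succ (Nat.zero_le _), by omega⟩)]
        · have hk := hmemR k hi
          simp only [Sum.elim_inr, wl6, hk, true_and]
          rw [Finset.sum_ite_mem, Finset.inter_eq_right.2 (Finset.Icc_subset_Icc hd1 le_rfl),
            Finset.sum_const, Nat.card_Icc, smul_eq_mul, mul_one]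
          omega
      · intro t
        refine le_trans (Finset.sum_le_sum_of_subset (Finset.subset_univ _)) ?_
        rw [Fintype.sum_sum_type]
        simp only [Sum.elim_inl, Sum.elim_inr]
        have hitem : ∀ (p q : Prop) [Decidable p] [Decidable q], (p → q) →
            (if p then (1 : ℕ) else 0) ≤ (if q then 1 else 0) := by
          intro p q _ _ hpq
          split_ifs with h1 h2 <;> simp_all
        rcases lt_or_ge t d1 with htd | htd
        · have h2z : ∑ k : Fin N, (if (k : ℕ) < C ∧ t ∈ Finset.Icc d1 d2 then 1 else 0) = 0 :=
            Finset.sum_eq_zero fun k _ => if_neg (by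
              rintro ⟨-, hm⟩
              exact absurd (Finset.mem_Icc.1 hm).1 (by omega))
          rw [h2z, add_zero]
          refine le_trans (Finset.sum_le_sum fun j _ => hitem _ _ (fun h => h.2)) ?_
          exact sum_slot_le C t hC
        · have h1z : ∑ j : Fin (C * d1),
              (if (j : ℕ) < C * (d1 - 1) ∧ t = (j : ℕ) / C + 1 then 1 else 0) = 0 :=
            Finset.sum_eq_zero fun j _ => if_neg (by
              rintro ⟨hj, rfl⟩
              have := hslot2 j hj
              omega)
          rw [h1z, zero_add]
          refine le_trans (Finset.sum_le_sum fun k _ => hitem _ _ (fun h => h.1)) ?_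
          exact sum_lt_le C
    · -- welfare of the good schedule
      have hdisjB : Disjoint
          ((Finset.univ.map (Fin.castLEEmb hle1)).map
            (⟨Sum.inl, Sum.inl_injective⟩ : Fin (C * d1) ↪ Fin (C * d1) ⊕ Fin N))
          ((Finset.univ.map (Fin.castLEEmb hN)).map
            (⟨Sum.inr, Sum.inr_injective⟩ : Fin N ↪ Fin (C * d1) ⊕ Fin N)) := by
        rw [Finset.disjoint_left]
        rintro i hi hi'
        obtain ⟨j', _, rfl⟩ := Finset.mem_map.1 hi
        obtain ⟨k', _, he⟩ := Finset.mem_map.1 hi'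
        simp at he
      rw [Finset.sum_union hdisjB, Finset.sum_map, Finset.sum_map, Finset.sum_map,
        Finset.sum_map]
      simp only [Function.Embedding.coeFn_mk, val6, Sum.elim_inl, Sum.elim_inr]
      rw [Finset.sum_const, Finset.sum_const, Finset.card_univ, Finset.card_univ,
        Fintype.card_fin, Fintype.card_fin, nsmul_eq_mul, nsmul_eq_mul]
      apply le_of_eq
      push_cast [c1, c2]
      ring
  · -- the ratio bound
    rw [hsum2]
    have e1 : (1 + ε) * ((C : ℝ) * (d1 : ℝ)) = (C : ℝ) * ((1 + ε) * d1) := by ring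
    have e2 : (C : ℝ) * ((d2 : ℝ) - d1 + 1) + (1 + ε) * ((C : ℝ) * ((d1 : ℝ) - 1)) =
        (C : ℝ) * ((1 + ε) * ((d1 : ℝ) - 1) + ((d2 : ℝ) - d1 + 1)) := by ring
    rw [e1, e2, mul_div_mul_left _ _ hC0]
end

section
/- Let a task T_i have deadline d_i, workload D_i, parallelism bound k_i ≤ C, and slackness s_i = d_i/len_i ≥ s where len_i = ⌈D_i/k_i⌉. Suppose at some moment the number of time slots t ∈ [1, d_i] with at least k_i available machines is μ ≤ len_i - 1, and T_i cannot be fully allocated, i.e., Σ_{t ≤ d_i} min(k_i, available(t)) < D_i. Then the utilized fraction of the C·d_i total capacity in [1, d_i] is at least (C·d_i - μ·C - (D_i - μ·k_i)) / (C·d_i) ≥ (s-1)/s. -/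
/-- If a task with workload `D`, deadline `d`, parallelism bound `k ≤ C` and slackness
at least `s` cannot be fully allocated, and only `μ ≤ ⌈D/k⌉ - 1` slots in `[1, d]` have
at least `k` available machines, then the utilization of `[1, d]` is at least
`(C·d - μ·C - (D - μ·k)) / (C·d) ≥ (s-1)/s`. -/
theorem greedy_utilization_bound (C d D k μ : ℕ) (avail : ℕ → ℕ) (s : ℝ)
    (hk : 0 < k) (hkC : k ≤ C) (hd : 0 < d) (hD : 0 < D)
    (hs1 : 1 ≤ s)
    (hslack : s ≤ (d : ℝ) / (((D + k - 1) / k : ℕ) : ℝ))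
    (havail : ∀ t, avail t ≤ C)
    (hμ : μ = ((Finset.Icc 1 d).filter (fun t => k ≤ avail t)).card)
    (hμle : μ + 1 ≤ (D + k - 1) / k)
    (hfail : ∑ t ∈ Finset.Icc 1 d, min k (avail t) < D) :
    ((C * d : ℝ) - (μ : ℝ) * C - ((D : ℝ) - (μ : ℝ) * k)) / ((C : ℝ) * d) ≤
        ((C * d : ℝ) - ∑ t ∈ Finset.Icc 1 d, (avail t : ℝ)) / ((C : ℝ) * d) ∧
    (s - 1) / s ≤
        ((C * d : ℝ) - (μ : ℝ) * C - ((D : ℝ) - (μ : ℝ) * k)) / ((C : ℝ) * d) := by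
  set L := (D + k - 1) / k with hL
  have hC : 0 < C := lt_of_lt_of_le hk hkC
  have hCd : (0:ℝ) < (C:ℝ) * d := by positivity
  have hspos : (0:ℝ) < s := lt_of_lt_of_le one_pos hs1
  -- D ≤ k * L
  have hDL : D ≤ k * L := by
    have hkq := Nat.div_add_mod (D + k - 1) k
    have hr := Nat.mod_lt (D + k - 1) hk
    set M := k * L with hM
    omega
  have hL1 : 1 ≤ L := (Nat.one_le_div_iff hk).2 (by omega)
  -- Part 1: sum bound in ℕ
  have hsum : (∑ t ∈ Finset.Icc 1 d, avail t) + μ * k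
      ≤ μ * C + ∑ t ∈ Finset.Icc 1 d, min k (avail t) := by
    classical
    set S := Finset.Icc 1 d
    set B := S.filter (fun t => k ≤ avail t) with hB
    have h1 : ∑ t ∈ S, avail t = ∑ t ∈ B, avail t
        + ∑ t ∈ S.filter (fun t => ¬ k ≤ avail t), avail t :=
      (Finset.sum_filter_add_sum_filter_not S _ _).symm
    have h2 : ∑ t ∈ S, min k (avail t) = ∑ t ∈ B, min k (avail t)
        + ∑ t ∈ S.filter (fun t => ¬ k ≤ avail t), min k (avail t) :=
      (Finset.sum_filter_add_sum_filter_not S _ _).symm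
    have hBmin : ∑ t ∈ B, min k (avail t) = μ * k := by
      rw [hμ]
      rw [Finset.sum_congr rfl (fun t ht => ?_), Finset.sum_const, smul_eq_mul]
      exact min_eq_left (Finset.mem_filter.1 ht).2
    have hBav : ∑ t ∈ B, avail t ≤ μ * C := by
      calc ∑ t ∈ B, avail t ≤ ∑ _t ∈ B, C := Finset.sum_le_sum (fun t _ => havail t)
        _ = μ * C := by rw [Finset.sum_const, smul_eq_mul, hμ]
    have hSmav : ∑ t ∈ S.filter (fun t => ¬ k ≤ avail t), avail t
        = ∑ t ∈ S.filter (fun t => ¬ k ≤ avail t), min k (avail t) := by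
      refine Finset.sum_congr rfl (fun t ht => ?_)
      have := (Finset.mem_filter.1 ht).2
      omega
    omega
  have hsumR : (∑ t ∈ Finset.Icc 1 d, (avail t : ℝ))
      ≤ (μ:ℝ) * C + ((D:ℝ) - (μ:ℝ) * k) := by
    have h2 : (∑ t ∈ Finset.Icc 1 d, avail t) + μ * k < μ * C + D :=
      lt_of_le_of_lt hsum (by omega)
    have := (Nat.cast_lt (α := ℝ)).2 h2
    push_cast at this ⊢
    linarith
  refine ⟨(div_le_div_iff_of_pos_right hCd).2 (by linarith [hsumR]), ?_⟩
  -- Part 2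
  have hLpos : (0:ℝ) < (L:ℝ) := by exact_mod_cast hL1
  have hsL : s * L ≤ d := (le_div_iff₀ hLpos).1 hslack
  have hDLr : (D:ℝ) ≤ (k:ℝ) * L := by exact_mod_cast hDL
  have hmuL : (μ:ℝ) + 1 ≤ (L:ℝ) := by exact_mod_cast hμle
  have hkCr : (k:ℝ) ≤ (C:ℝ) := by exact_mod_cast hkC
  have hX : (μ:ℝ) * C + ((D:ℝ) - (μ:ℝ) * k) ≤ (C:ℝ) * L := by
    nlinarith [mul_nonneg (by linarith : (0:ℝ) ≤ (L:ℝ) - 1 - μ) (by linarith : (0:ℝ) ≤ (C:ℝ) - k)]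
  have hkey : s * ((μ:ℝ) * C + ((D:ℝ) - (μ:ℝ) * k)) ≤ (C:ℝ) * d := by
    calc s * ((μ:ℝ) * C + ((D:ℝ) - (μ:ℝ) * k)) ≤ s * ((C:ℝ) * L) := by
          apply mul_le_mul_of_nonneg_left hX (le_of_lt hspos)
      _ = (C:ℝ) * (s * L) := by ring
      _ ≤ (C:ℝ) * d := by
          apply mul_le_mul_of_nonneg_left hsL (by positivity)
  rw [div_le_div_iff₀ hspos hCd]
  nlinarith [hkey]
end

section
/- Given C ∈ ℕ⁺, d ∈ ℕ⁺, k ≤ C, len ≤ d, and D ≤ len·k with len = ⌈D/k⌉ and d/len ≥ s ≥ 1 (s real), the inequality (C·(d - len) + (C - k) + (len·k - D)) / (C·d) ≥ (s-1)/s holds. -/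
/-- Arithmetic core of the greedy utilization bound:
`(C·(d-len) + (C-k) + (len·k-D)) / (C·d) ≥ (s-1)/s`. -/
theorem utilization_arithmetic_core (C d k len D : ℕ) (s : ℝ)
    (hC : 0 < C) (hd : 0 < d) (hk : 0 < k) (hlen : 0 < len) (hD : 0 < D)
    (hkC : k ≤ C) (hlend : len ≤ d) (hDlen : D ≤ len * k)
    (hlendef : len = (D + k - 1) / k)
    (hs1 : 1 ≤ s) (hs : s ≤ (d : ℝ) / (len : ℝ)) :
    (s - 1) / s ≤
      ((C : ℝ) * ((d : ℝ) - (len : ℝ)) + ((C : ℝ) - (k : ℝ)) +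
          ((len : ℝ) * (k : ℝ) - (D : ℝ))) / ((C : ℝ) * (d : ℝ)) := by
  have hCpos : (0:ℝ) < C := by exact_mod_cast hC
  have hdpos : (0:ℝ) < d := by exact_mod_cast hd
  have hlenpos : (0:ℝ) < len := by exact_mod_cast hlen
  have hspos : (0:ℝ) < s := lt_of_lt_of_le one_pos hs1
  have hkC' : (k:ℝ) ≤ C := by exact_mod_cast hkC
  have hDlen' : (D:ℝ) ≤ (len:ℝ) * k := by exact_mod_cast hDlen
  have hsl : s * len ≤ d := by
    rw [div_eq_mul_inv] at hs
    calc s * len ≤ ((d:ℝ) * (len:ℝ)⁻¹) * len := by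
          exact mul_le_mul_of_nonneg_right hs hlenpos.le
      _ = d := by field_simp
  have h1 : (s - 1) / s ≤ ((d:ℝ) - len) / d := by
    rw [div_le_div_iff₀ hspos hdpos]
    nlinarith
  have h2 : ((d:ℝ) - len) / d ≤
      ((C : ℝ) * ((d : ℝ) - (len : ℝ)) + ((C : ℝ) - (k : ℝ)) +
          ((len : ℝ) * (k : ℝ) - (D : ℝ))) / ((C : ℝ) * (d : ℝ)) := by
    rw [div_le_div_iff₀ hdpos (by positivity)]
    nlinarith
  linarith
end

section
/- In the single-machine case (C = 1 and all parallelism bounds k_i = 1), the boundary condition for a set S of tasks is equivalent to the classical EDF feasibility condition: for every deadline τ_m, the total workload of tasks with deadline at most τ_m is at most τ_m, i.e., Σ_{T_j∈S : d_j ≤ τ_m} D_j ≤ τ_m for all m ∈ {1,...,L}. -/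
/-- In the single-machine case (`C = 1`, all parallelism bounds equal `1`), the
boundary condition is equivalent to classical EDF feasibility: for every deadline
`τ_m`, the total workload of tasks with deadline at most `τ_m` is at most `τ_m`. -/
theorem boundary_iff_edf {ι : Type*} [DecidableEq ι] (S : Finset ι) (dl Dw : ι → ℕ)
    (L : ℕ) (τ : ℕ → ℕ)
    (hτ0 : τ 0 = 0) (hτmono : ∀ m < L, τ m < τ (m + 1)) (hL : 0 < L)
    (hdl : ∀ j ∈ S, ∃ m, 1 ≤ m ∧ m ≤ L ∧ dl j = τ m)
    (hDpos : ∀ j ∈ S, 0 < Dw j) :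
    BoundaryCond S dl Dw (fun _ => 1) τ 1 L ↔
      ∀ m, 1 ≤ m → m ≤ L →
        (∑ j ∈ S.filter (fun j => dl j ≤ τ m), Dw j) ≤ τ m := by
  classical
  -- τ is monotone on [0, L]
  have hτle : ∀ a b : ℕ, a ≤ b → b ≤ L → τ a ≤ τ b := by
    intro a b hab
    induction hab with
    | refl => intro _; exact le_refl _
    | @step n hn ih =>
      intro hbL
      exact le_trans (ih (by omega)) (le_of_lt (hτmono n (by omega)))
  have hdl_le : ∀ j ∈ S, dl j ≤ τ L := by
    intro j hj
    obtain ⟨m, hm1, hmL, hdlj⟩ := hdl j hj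
    rw [hdlj]; exact hτle m L hmL le_rfl
  have hdl_pos : ∀ j ∈ S, 0 < dl j := by
    intro j hj
    obtain ⟨m, hm1, hmL, hdlj⟩ := hdl j hj
    have h1 : τ 0 < τ 1 := hτmono 0 hL
    have h2 : τ 1 ≤ τ m := hτle 1 m hm1 hmL
    omega
  -- the simplified λ
  have hlamS : lamS S dl Dw (fun _ => 1) τ L =
      fun i => ∑ j ∈ S, min (Dw j) (dl j - τ (L - i)) := by
    funext i
    unfold lamS
    simp only [ceilDiv, Nat.add_sub_cancel, Nat.div_one, one_mul]
    exact Finset.sum_congr rfl fun j _ => (min_def _ _).symm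
  set lam : ℕ → ℕ := fun i => ∑ j ∈ S, min (Dw j) (dl j - τ (L - i)) with hlamdef
  have hlam_mono : Monotone lam := by
    apply monotone_nat_of_le_succ
    intro n
    apply Finset.sum_le_sum
    intro j _
    have h : τ (L - (n + 1)) ≤ τ (L - n) := hτle _ _ (by omega) (by omega)
    exact min_le_min le_rfl (Nat.sub_le_sub_left h (dl j))
  have hg_le : ∀ s, lamCseq 1 L τ lam s ≤ lam s := by
    intro s
    induction s with
    | zero => exact Nat.zero_le _
    | succ n ih =>
      have h1 : lamCseq 1 L τ lam n ≤ lam (n + 1) :=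
        le_trans ih (hlam_mono (Nat.le_succ n))
      calc lamCseq 1 L τ lam (n + 1)
          = lamCseq 1 L τ lam n +
            min (lam (n + 1) - lamCseq 1 L τ lam n) (1 * (τ (L - n) - τ (L - n - 1))) := rfl
        _ ≤ lamCseq 1 L τ lam n + (lam (n + 1) - lamCseq 1 L τ lam n) :=
            Nat.add_le_add_left (min_le_left _ _) _
        _ = lam (n + 1) := Nat.add_sub_cancel' h1
  -- sum identity: total - lam i = ∑ (Dw j - (dl j - τ (L - i)))
  have hsum : ∀ i, (∑ j ∈ S, Dw j) - lam i =
      ∑ j ∈ S, (Dw j - (dl j - τ (L - i))) := by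
    intro i
    have h : ∑ j ∈ S, Dw j = lam i + ∑ j ∈ S, (Dw j - (dl j - τ (L - i))) := by
      rw [hlamdef, ← Finset.sum_add_distrib]
      apply Finset.sum_congr rfl
      intro j _
      rw [min_def]
      split <;> omega
    omega
  constructor
  · -- Boundary ⇒ EDF
    intro hB m hm1 hmL
    have h1 := hB m hmL
    unfold muC at h1
    rw [hlamS] at h1
    have h2 : (∑ j ∈ S, Dw j) - lam (L - m) ≤ τ m := by
      have h3 : (∑ j ∈ S, Dw j) - lam (L - m) ≤
          (∑ j ∈ S, Dw j) - lamCseq 1 L τ lam (L - m) :=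
        Nat.sub_le_sub_left (hg_le (L - m)) _
      omega
    rw [hsum, Nat.sub_sub_self hmL] at h2
    calc ∑ j ∈ S.filter (fun j => dl j ≤ τ m), Dw j
        = ∑ j ∈ S.filter (fun j => dl j ≤ τ m), (Dw j - (dl j - τ m)) := by
          apply Finset.sum_congr rfl
          intro j hj
          have hj2 : dl j ≤ τ m := (Finset.mem_filter.mp hj).2
          omega
      _ ≤ ∑ j ∈ S, (Dw j - (dl j - τ m)) :=
          Finset.sum_le_sum_of_subset (Finset.filter_subset _ _)
      _ ≤ τ m := h2
  · -- EDF ⇒ Boundary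
    intro hE
    -- key demand bound
    have hM : ∀ r, r ≤ L → (∑ j ∈ S, (Dw j - (dl j - τ r))) ≤ τ r := by
      intro r hr
      set t : ι → ℕ := fun j => Dw j - (dl j - τ r) with htdef
      by_cases hP : ∃ j ∈ S, τ r < dl j ∧ 0 < t j
      · obtain ⟨j₀, hj₀S, hj₀1, hj₀2⟩ := hP
        set P := S.filter (fun j => τ r < dl j ∧ 0 < t j) with hPdef
        have hPne : P.Nonempty := ⟨j₀, Finset.mem_filter.mpr ⟨hj₀S, hj₀1, hj₀2⟩⟩
        obtain ⟨jm, hjmP, hjmmax⟩ := Finset.exists_max_image P dl hPne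
        have hjmS : jm ∈ S := (Finset.mem_filter.mp hjmP).1
        have hjm1 : τ r < dl jm := (Finset.mem_filter.mp hjmP).2.1
        have hjm2 : 0 < t jm := (Finset.mem_filter.mp hjmP).2.2
        obtain ⟨ms, hms1, hmsL, hdljm⟩ := hdl jm hjmS
        have hEms := hE ms hms1 hmsL
        set u : ι → ℕ := fun j => if dl j ≤ τ ms then Dw j else 0 with hudef
        set N := S.filter (fun j => ¬(τ r < dl j ∧ 0 < t j)) with hNdef
        have h1 : ∑ j ∈ P, t j + ∑ j ∈ N, t j = ∑ j ∈ S, t j :=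
          Finset.sum_filter_add_sum_filter_not S _ t
        have h2 : t jm + ∑ j ∈ P.erase jm, t j = ∑ j ∈ P, t j :=
          Finset.add_sum_erase P t hjmP
        have h3 : ∑ j ∈ P, u j + ∑ j ∈ N, u j = ∑ j ∈ S, u j :=
          Finset.sum_filter_add_sum_filter_not S _ u
        have h4 : u jm + ∑ j ∈ P.erase jm, u j = ∑ j ∈ P, u j :=
          Finset.add_sum_erase P u hjmP
        have h5 : ∑ j ∈ P.erase jm, t j ≤ ∑ j ∈ P.erase jm, u j := by
          apply Finset.sum_le_sum
          intro j hj
          have hjP : j ∈ P := Finset.mem_of_mem_erase hj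
          have hle : dl j ≤ τ ms := by
            have := hjmmax j hjP; omega
          simp only [hudef, if_pos hle, htdef]
          exact Nat.sub_le _ _
        have h6 : ∑ j ∈ N, t j ≤ ∑ j ∈ N, u j := by
          apply Finset.sum_le_sum
          intro j hj
          obtain ⟨hjS, hjn⟩ := Finset.mem_filter.mp hj
          by_cases hc : τ r < dl j
          · have ht0 : t j = 0 := by
              by_contra h
              exact hjn ⟨hc, Nat.pos_of_ne_zero h⟩
            rw [ht0]; exact Nat.zero_le _
          · have hle : dl j ≤ τ ms := by
              have h7 : τ r < τ ms := by rw [← hdljm]; exact hjm1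
              omega
            simp only [hudef, if_pos hle, htdef]
            exact Nat.sub_le _ _
        have h7 : ∑ j ∈ S, u j ≤ τ ms := by
          have heq : ∑ j ∈ S.filter (fun j => dl j ≤ τ ms), Dw j = ∑ j ∈ S, u j :=
            Finset.sum_filter _ _
          omega
        have h8 : u jm = Dw jm := by
          simp only [hudef, if_pos (le_of_eq hdljm)]
        have h9 : t jm = Dw jm - (τ ms - τ r) := by
          simp only [htdef, hdljm]
        have h10 : τ ms - τ r < Dw jm := by omega
        have h11 : τ r ≤ τ ms := by
          have : τ r < dl jm := hjm1; omega
        have h12 : Dw jm ≤ ∑ j ∈ S, u j := by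
          have := Finset.single_le_sum (f := u) (fun i _ => Nat.zero_le (u i)) hjmS
          omega
        have h13 : S.sum t = ∑ j ∈ S, t j := rfl
        have h14 : S.sum u = ∑ j ∈ S, u j := rfl
        clear_value t u
        omega
      · push_neg at hP
        have hb : ∑ j ∈ S, t j ≤ ∑ j ∈ S.filter (fun j => dl j ≤ τ r), Dw j := by
          have heq : ∑ j ∈ S.filter (fun j => dl j ≤ τ r), Dw j =
              ∑ j ∈ S, (if dl j ≤ τ r then Dw j else 0) := Finset.sum_filter _ _
          rw [heq]
          apply Finset.sum_le_sum
          intro j hj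
          by_cases hc : dl j ≤ τ r
          · simp only [if_pos hc, htdef]; exact Nat.sub_le _ _
          · have := hP j hj (by omega)
            simp only [if_neg hc, htdef] at *
            omega
        rcases Nat.eq_zero_or_pos r with hr0 | hr1
        · subst hr0
          have hemp : S.filter (fun j => dl j ≤ τ 0) = ∅ := by
            apply Finset.filter_eq_empty_iff.mpr
            intro j hj
            have := hdl_pos j hj
            omega
          rw [hemp, Finset.sum_empty] at hb
          rw [hτ0]
          exact le_trans hb (Nat.zero_le _)
        · exact le_trans hb (hE r hr1 hr)
    -- M ⇒ Boundary by induction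
    have hgood : ∀ s, s ≤ L → (∑ j ∈ S, Dw j) - lamCseq 1 L τ lam s ≤ τ (L - s) := by
      intro s
      induction s with
      | zero =>
        intro _
        have h0 := hM L le_rfl
        have heq : ∑ j ∈ S, (Dw j - (dl j - τ L)) = ∑ j ∈ S, Dw j := by
          apply Finset.sum_congr rfl
          intro j hj
          have := hdl_le j hj
          omega
        rw [heq] at h0
        have h1 : (∑ j ∈ S, Dw j) - lamCseq 1 L τ lam 0 ≤ ∑ j ∈ S, Dw j :=
          Nat.sub_le _ _
        simpa using le_trans h1 h0
      | succ n ih =>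
        intro hn1
        have hgn := ih (by omega)
        have hglam := hg_le n
        have hstep : lamCseq 1 L τ lam (n + 1) = lamCseq 1 L τ lam n +
            min (lam (n + 1) - lamCseq 1 L τ lam n) (1 * (τ (L - n) - τ (L - n - 1))) := rfl
        rcases le_total (lam (n + 1) - lamCseq 1 L τ lam n)
            (1 * (τ (L - n) - τ (L - n - 1))) with hc | hc
        · have hgl : lamCseq 1 L τ lam n ≤ lam (n + 1) :=
            le_trans hglam (hlam_mono (Nat.le_succ n))
          have heq : lamCseq 1 L τ lam (n + 1) = lam (n + 1) := by
            rw [hstep, min_eq_left hc]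
            omega
          rw [heq, hsum]
          exact hM (L - (n + 1)) (Nat.sub_le _ _)
        · have hτs : τ (L - (n + 1)) ≤ τ (L - n) := hτle _ _ (by omega) (by omega)
          have heq : lamCseq 1 L τ lam (n + 1) =
              lamCseq 1 L τ lam n + (τ (L - n) - τ (L - (n + 1))) := by
            rw [hstep, min_eq_right hc, one_mul, Nat.sub_sub]
          rw [heq]
          omega
    intro m hm
    unfold muC
    rw [hlamS]
    have h := hgood (L - m) (Nat.sub_le _ _)
    rw [Nat.sub_sub_self hm] at h
    simpa using h
end
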